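/- For non-negative reals a, b with b ≠ a + 1, for every positive integer n: ∑_{j=1}^n Γ(j+a)/Γ(j+b) = (1/(b-a-1)) · (Γ(a+1)/Γ(b) − Γ(n+a+1)/Γ(n+b)). -/

import Mathlib

open Finset

/-- Gamma ratio summation identity: for non-negative reals `a`, `b` with `b ≠ a + 1`,
`∑_{j=1}^n Γ(j+a)/Γ(j+b) = (1/(b-a-1)) (Γ(a+1)/Γ(b) − Γ(n+a+1)/Γ(n+b))`. -/
theorem gamma_ratio_sum (a b : ℝ) (ha : 0 ≤ a) (hb : 0 ≤ b) (hab : b ≠ a + 1)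
    (n : ℕ) (hn : 1 ≤ n) :
    ∑ j ∈ Finset.Icc 1 n, Real.Gamma (j + a) / Real.Gamma (j + b)
      = (1 / (b - a - 1)) *
        (Real.Gamma (a + 1) / Real.Gamma b - Real.Gamma (n + a + 1) / Real.Gamma (n + b)) := by
  have hba : b - a - 1 ≠ 0 := fun h => hab (by linarith)
  set F : ℕ → ℝ := fun j => Real.Gamma (j + a) / Real.Gamma (j + b - 1) with hF
  have key : ∀ j : ℕ, 1 ≤ j →
      Real.Gamma (j + a) / Real.Gamma (j + b)
        = (1 / (b - a - 1)) * (F j - F (j + 1)) := by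
    intro j hj
    have hj1 : (1:ℝ) ≤ (j:ℝ) := by exact_mod_cast hj
    have hja : (0:ℝ) < (j:ℝ) + a := by linarith
    have hGa : Real.Gamma ((j:ℝ) + a) > 0 := Real.Gamma_pos_of_pos hja
    have hsucc : Real.Gamma (((j:ℕ)+1 : ℕ) + a) = ((j:ℝ) + a) * Real.Gamma ((j:ℝ) + a) := by
      push_cast
      have : ((j:ℝ) + 1 + a) = ((j:ℝ) + a) + 1 := by ring
      rw [this, Real.Gamma_add_one (ne_of_gt hja)]
    simp only [hF]
    push_cast
    rcases eq_or_ne ((j:ℝ) + b - 1) 0 with h0 | h0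
    · -- then j = 1, b = 0
      have hjle : (j:ℝ) ≤ 1 := by linarith
      have hj1' : (j:ℝ) = 1 := le_antisymm hjle hj1
      have hb0 : b = 0 := by linarith
      rw [hj1', hb0]
      have h2 : Real.Gamma (2 + a) = (1 + a) * Real.Gamma (1 + a) := by
        have h : (2 + a : ℝ) = (1 + a) + 1 := by ring
        rw [h, Real.Gamma_add_one (by linarith)]
      have ha1 : (1:ℝ) + a ≠ 0 := by linarith
      norm_num [Real.Gamma_zero, Real.Gamma_one]
      rw [h2]
      have hm : (-1 - a : ℝ) ≠ 0 := by linarith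
      have hc : (-1 - a) * (-1 - a)⁻¹ = 1 := mul_inv_cancel₀ hm
      field_simp
      linear_combination (-1 : ℝ) * hc
    · have h0' : (0:ℝ) < (j:ℝ) + b - 1 := lt_of_le_of_ne (by linarith) (Ne.symm h0)
      have hGb : Real.Gamma ((j:ℝ) + b - 1) > 0 := Real.Gamma_pos_of_pos h0'
      have hrec : Real.Gamma ((j:ℝ) + b) = ((j:ℝ) + b - 1) * Real.Gamma ((j:ℝ) + b - 1) := by
        have h : ((j:ℝ) + b) = ((j:ℝ) + b - 1) + 1 := by ring
        nth_rewrite 1 [h]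
        rw [Real.Gamma_add_one h0]
      have e4 : ((j:ℝ) + 1 + b - 1) = (j:ℝ) + b := by ring
      have e5 : ((j:ℝ) + 1 + a) = ((j:ℝ) + a) + 1 := by ring
      rw [e4, e5, Real.Gamma_add_one (ne_of_gt hja), hrec]
      field_simp
      ring
  rw [Finset.sum_congr rfl (fun j hj => key j (Finset.mem_Icc.mp hj).1), ← Finset.mul_sum]
  have htel : ∑ j ∈ Finset.Icc 1 n, (F j - F (j + 1)) = F 1 - F (n + 1) := by
    rw [show Finset.Icc 1 n = Finset.Ico 1 (n+1) from by rw [Finset.Ico_add_one_right_eq_Icc],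
       Finset.sum_Ico_eq_sum_range]
    simp only [Nat.add_sub_cancel]
    have := Finset.sum_range_sub' (fun i => F (1 + i)) n
    simpa [add_assoc, add_comm, add_left_comm] using this
  rw [htel]
  have hF1 : F 1 = Real.Gamma (a + 1) / Real.Gamma b := by
    simp only [hF]
    norm_num [add_comm]
  have hFn : F (n + 1) = Real.Gamma (n + a + 1) / Real.Gamma (n + b) := by
    simp only [hF]
    push_cast
    congr 1
    · congr 1; ring
    · congr 1; ring
  rw [hF1, hFn]
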